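/- Let A ∈ ℝ^{m×n}, let S ⊆ {1,…,m}, let B = A − π_S(A), and let r ≥ 1 be an integer. Then ∑_{T ⊆ {1,…,m}\S, |T|=r} det(A_{S∪T} A_{S∪T}^T) · ‖A − π_{S∪T}(A)‖_F² = (r+1) · det(A_S A_S^T) · ∑_{T ⊆ {1,…,m}, |T|=r+1} det(B_T B_T^T). -/

import Mathlib

open Matrix BigOperators

noncomputable def projSpan {m n : ℕ} (A : Matrix (Fin m) (Fin n) ℝ) (S : Finset (Fin m)) :
    Matrix (Fin m) (Fin n) ℝ := fun i j =>
  (Submodule.orthogonalProjectionOnto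
      (Submodule.span ℝ (Set.range (fun s : S => (WithLp.equiv 2 (Fin n → ℝ)).symm (A s))))
      ((WithLp.equiv 2 (Fin n → ℝ)).symm (A i)) : EuclideanSpace ℝ (Fin n)) j

def rowSub {m n : ℕ} (A : Matrix (Fin m) (Fin n) ℝ) (S : Finset (Fin m)) :
    Matrix {x // x ∈ S} (Fin n) ℝ := fun i j => A i.1 j

noncomputable def gramDet {m n : ℕ} (A : Matrix (Fin m) (Fin n) ℝ) (S : Finset (Fin m)) : ℝ :=
  (rowSub A S * (rowSub A S)ᵀ).det

noncomputable def frobSq {m n : ℕ} (M : Matrix (Fin m) (Fin n) ℝ) : ℝ :=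
  ∑ i, ∑ j, (M i j)^2

noncomputable def specNorm {m n : ℕ} (M : Matrix (Fin m) (Fin n) ℝ) : ℝ :=
  ‖LinearMap.toContinuousLinearMap (Matrix.toEuclideanLin M)‖

section AuxProof
open Finset
open scoped RealInnerProductSpace
variable {n : ℕ} {ι : Type} [Fintype ι]
variable {n : ℕ} {ι : Type} [Fintype ι]
noncomputable def gram (v : ι → EuclideanSpace ℝ (Fin n)) : Matrix ι ι ℝ := fun i j => ⟪v i, v j⟫
theorem gram_mulC (C : Matrix ι ι ℝ) (v : ι → EuclideanSpace ℝ (Fin n)) :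
    gram (fun i => ∑ k, C i k • v k) = C * gram v * Cᵀ := by
  ext i j
  simp only [_root_.gram, Matrix.mul_apply, Matrix.transpose_apply, sum_inner, inner_sum,
    real_inner_smul_left, real_inner_smul_right, Finset.sum_mul, Finset.mul_sum]
  exact Finset.sum_congr rfl fun k _ => Finset.sum_congr rfl fun l _ => by ring

theorem det_gram_option [DecidableEq ι] (v : ι → EuclideanSpace ℝ (Fin n))
    (w : EuclideanSpace ℝ (Fin n)) :
    (gram (fun o : Option ι => o.elim w v)).det
      = ‖w - (Submodule.orthogonalProjectionOnto (Submodule.span ℝ (Set.range v)) w :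
          EuclideanSpace ℝ (Fin n))‖ ^ 2 * (gram v).det := by
  set K := Submodule.span ℝ (Set.range v) with hK
  set p : EuclideanSpace ℝ (Fin n) := (Submodule.orthogonalProjectionOnto K w : EuclideanSpace ℝ (Fin n))
    with hpdef
  have hp : p ∈ K := SetLike.coe_mem _
  obtain ⟨c, hc⟩ := (Submodule.mem_span_range_iff_exists_fun ℝ).mp hp
  set h : EuclideanSpace ℝ (Fin n) := w - p with hhdef
  have hhK : h ∈ Kᗮ := Submodule.sub_starProjection_mem_orthogonal w
  set C : Matrix (Option ι) (Option ι) ℝ := fun o₁ o₂ =>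
    match o₁, o₂ with
    | none, none => 1
    | none, some k => c k
    | some _, none => 0
    | some a, some b => if a = b then 1 else 0
    with hCdef
  set u : Option ι → EuclideanSpace ℝ (Fin n) := fun o => o.elim h v with hu
  have key : (fun o => ∑ k, C o k • u k) = fun o : Option ι => o.elim w v := by
    funext o
    cases o with
    | none =>
        simp only [Fintype.sum_option, hCdef, hu, Option.elim, one_smul, ite_smul, zero_smul]
        rw [hc, hhdef]
        simp
    | some a =>
        simp [Fintype.sum_option, hCdef, hu, ite_smul, Finset.sum_ite_eq]
  have hgram : gram (fun o : Option ι => o.elim w v) = C * gram u * Cᵀ := by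
    rw [← key, gram_mulC]
  have hdetC : C.det = 1 := by
    rw [← Matrix.det_reindex_self (Equiv.optionEquivSumPUnit.{0,0} ι) C]
    have hCb : (Matrix.reindex (Equiv.optionEquivSumPUnit.{0,0} ι) (Equiv.optionEquivSumPUnit.{0,0} ι) C)
        = Matrix.fromBlocks (1 : Matrix ι ι ℝ) 0 (Matrix.of fun _ k => c k) 1 := by
      ext i j
      rcases i with a | pu <;> rcases j with b | pu' <;>
        simp [Matrix.fromBlocks, Matrix.one_apply, hCdef]
      all_goals rfl
    rw [hCb, Matrix.det_fromBlocks_zero₁₂]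
    simp
  have hdetU : (gram u).det = (gram v).det * ‖h‖ ^ 2 := by
    rw [← Matrix.det_reindex_self (Equiv.optionEquivSumPUnit.{0,0} ι) (gram u)]
    have hub : (Matrix.reindex (Equiv.optionEquivSumPUnit.{0,0} ι) (Equiv.optionEquivSumPUnit.{0,0} ι) (gram u))
        = Matrix.fromBlocks (gram v) 0 0 (Matrix.of fun _ _ => ‖h‖ ^ 2) := by
      ext i j
      rcases i with a | pu <;> rcases j with b | pu'
      · simp [Matrix.fromBlocks, _root_.gram, hu]
      · simp only [Matrix.reindex_apply, Matrix.submatrix_apply]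
        have : ⟪v a, h⟫ = 0 := hhK (v a) (Submodule.subset_span ⟨a, rfl⟩)
        simp [Matrix.fromBlocks, _root_.gram, hu, this]
      · simp only [Matrix.reindex_apply, Matrix.submatrix_apply]
        have : ⟪v b, h⟫ = 0 := hhK (v b) (Submodule.subset_span ⟨b, rfl⟩)
        rw [real_inner_comm] at this
        simp [Matrix.fromBlocks, _root_.gram, hu, this]
      · have hnorm : ‖h‖ ^ 2 = ∑ x, h x * h x := by
          rw [EuclideanSpace.norm_eq, Real.sq_sqrt (by positivity)]
          simp only [Real.norm_eq_abs, sq_abs]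
          simp only [sq]
        simp [Matrix.fromBlocks, _root_.gram, hu, hnorm]
    rw [hub, Matrix.det_fromBlocks_zero₁₂]
    congr 1
    rw [Matrix.det_unique]
    rfl
  rw [hgram, Matrix.det_mul, Matrix.det_mul, Matrix.det_transpose, hdetC, hdetU]
  ring

theorem proj_congr {K K' : Submodule ℝ (EuclideanSpace ℝ (Fin n))}
    (h : K = K') (x : EuclideanSpace ℝ (Fin n)) :
    (Submodule.orthogonalProjectionOnto K x : EuclideanSpace ℝ (Fin n)) = Submodule.orthogonalProjectionOnto K' x := by
  subst h; rfl

theorem proj_sup (U W : Submodule ℝ (EuclideanSpace ℝ (Fin n))) (hW : W ≤ Uᗮ)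
    (x : EuclideanSpace ℝ (Fin n)) :
    x - (Submodule.orthogonalProjectionOnto (U ⊔ W) x : EuclideanSpace ℝ (Fin n))
      = (x - Submodule.orthogonalProjectionOnto U x)
        - Submodule.orthogonalProjectionOnto W (x - Submodule.orthogonalProjectionOnto U x) := by
  set b : EuclideanSpace ℝ (Fin n) := x - Submodule.orthogonalProjectionOnto U x with hb
  have hbU : b ∈ Uᗮ := Submodule.sub_starProjection_mem_orthogonal x
  have hWb : b - Submodule.orthogonalProjectionOnto W b ∈ Wᗮ := Submodule.sub_starProjection_mem_orthogonal b
  have hproj : (Submodule.orthogonalProjectionOnto (U ⊔ W) x : EuclideanSpace ℝ (Fin n))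
      = (Submodule.orthogonalProjectionOnto U x : EuclideanSpace ℝ (Fin n)) + Submodule.orthogonalProjectionOnto W b := by
    apply Submodule.eq_starProjection_of_mem_orthogonal (K := U ⊔ W)
    · exact Submodule.add_mem _ (Submodule.mem_sup_left (SetLike.coe_mem _))
        (Submodule.mem_sup_right (SetLike.coe_mem _))
    · have h1 : x - ((Submodule.orthogonalProjectionOnto U x : EuclideanSpace ℝ (Fin n))
          + Submodule.orthogonalProjectionOnto W b) = b - Submodule.orthogonalProjectionOnto W b := by
        rw [hb]; abel
      rw [h1, Submodule.mem_orthogonal]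
      intro y hy
      obtain ⟨yu, hyu, yw, hyw, rfl⟩ := Submodule.mem_sup.mp hy
      have hbomem : (b - Submodule.orthogonalProjectionOnto W b : EuclideanSpace ℝ (Fin n)) ∈ Uᗮ :=
        Submodule.sub_mem _ hbU (hW (SetLike.coe_mem _))
      have t1 : ⟪yu, b - Submodule.orthogonalProjectionOnto W b⟫ = 0 :=
        (Submodule.mem_orthogonal _ _).mp hbomem yu hyu
      have t2 : ⟪yw, b - Submodule.orthogonalProjectionOnto W b⟫ = 0 :=
        (Submodule.mem_orthogonal _ _).mp hWb yw hyw
      rw [inner_add_left, t1, t2, add_zero]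
  rw [hproj, hb]; abel

theorem enorm_sq (x : EuclideanSpace ℝ (Fin n)) : ‖x‖ ^ 2 = ∑ j, (x j) ^ 2 := by
  rw [EuclideanSpace.norm_eq, Real.sq_sqrt (by positivity)]
  simp only [Real.norm_eq_abs, sq_abs]


theorem gramDet_eq {m : ℕ} (V : Matrix (Fin m) (Fin n) ℝ) (T : Finset (Fin m)) :
    gramDet V T = (gram fun i : {x // x ∈ T} => (WithLp.equiv 2 (Fin n → ℝ)).symm (V i.1)).det := by
  unfold gramDet _root_.gram rowSub
  congr 1
  ext i j
  simp [Matrix.mul_apply, PiLp.inner_apply, mul_comm]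
  exact Matrix.mul_apply

theorem gramDet_insert {m : ℕ} (V : Matrix (Fin m) (Fin n) ℝ) (T : Finset (Fin m)) {i : Fin m}
    (hi : i ∉ T) :
    gramDet V (insert i T)
      = ‖(WithLp.equiv 2 (Fin n → ℝ)).symm (V i)
          - (Submodule.orthogonalProjectionOnto
              (Submodule.span ℝ (Set.range fun s : T => (WithLp.equiv 2 (Fin n → ℝ)).symm (V s)))
              ((WithLp.equiv 2 (Fin n → ℝ)).symm (V i)) : EuclideanSpace ℝ (Fin n))‖ ^ 2
        * gramDet V T := by
  classical
  rw [gramDet_eq, gramDet_eq, ← det_gram_option]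
  rw [← Matrix.det_reindex_self (Finset.subtypeInsertEquivOption hi) (gram _)]
  congr 1
  have hfam : ∀ o : Option {x // x ∈ T},
      (WithLp.equiv 2 (Fin n → ℝ)).symm (V ((Finset.subtypeInsertEquivOption hi).symm o).1)
        = o.elim ((WithLp.equiv 2 (Fin n → ℝ)).symm (V i))
            (fun s => (WithLp.equiv 2 (Fin n → ℝ)).symm (V s.1)) := by
    intro o; cases o <;> rfl
  ext o₁ o₂
  simp only [Matrix.reindex_apply, Matrix.submatrix_apply, _root_.gram, hfam]

theorem comb {m : ℕ} (g : Finset (Fin m) → ℝ) (r : ℕ) :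
    ∑ T ∈ Finset.powersetCard r (Finset.univ : Finset (Fin m)), ∑ i ∈ Tᶜ, g (insert i T)
      = ((r : ℝ) + 1) * ∑ T ∈ Finset.powersetCard (r + 1) (Finset.univ : Finset (Fin m)), g T := by
  classical
  have h1 : ∑ T ∈ Finset.powersetCard r (Finset.univ : Finset (Fin m)), ∑ i ∈ Tᶜ, g (insert i T)
      = ∑ T ∈ Finset.powersetCard (r + 1) (Finset.univ : Finset (Fin m)), ∑ i ∈ T, g T := by
    rw [Finset.sum_sigma', Finset.sum_sigma']
    refine Finset.sum_nbij' (fun x => ⟨insert x.2 x.1, x.2⟩) (fun x => ⟨x.1.erase x.2, x.2⟩)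
      ?_ ?_ ?_ ?_ ?_
    · rintro ⟨T, a⟩ hTa
      rw [Finset.mem_sigma] at hTa
      obtain ⟨hT, ha⟩ := hTa
      rw [Finset.mem_compl] at ha
      rw [Finset.mem_sigma, Finset.mem_powersetCard_univ]
      exact ⟨by rw [Finset.card_insert_of_notMem ha, Finset.mem_powersetCard_univ.mp hT],
        Finset.mem_insert_self _ _⟩
    · rintro ⟨T, a⟩ hTa
      rw [Finset.mem_sigma] at hTa
      obtain ⟨hT, ha⟩ := hTa
      rw [Finset.mem_sigma, Finset.mem_powersetCard_univ, Finset.card_erase_of_mem ha,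
        Finset.mem_powersetCard_univ.mp hT]
      exact ⟨rfl, Finset.mem_compl.mpr (Finset.notMem_erase _ _)⟩
    · rintro ⟨T, a⟩ hTa
      rw [Finset.mem_sigma] at hTa
      obtain ⟨hT, ha⟩ := hTa
      rw [Finset.mem_compl] at ha
      simp [Finset.erase_insert ha]
    · rintro ⟨T, a⟩ hTa
      rw [Finset.mem_sigma] at hTa
      obtain ⟨hT, ha⟩ := hTa
      simp [Finset.insert_erase ha]
    · rintro ⟨T, a⟩ _
      rfl
  rw [h1, Finset.mul_sum]
  refine Finset.sum_congr rfl fun T hT => ?_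
  rw [Finset.sum_const, Finset.mem_powersetCard_univ.mp hT, nsmul_eq_mul]
  push_cast
  ring

noncomputable def spanV {m : ℕ} (V : Matrix (Fin m) (Fin n) ℝ) (T : Finset (Fin m)) :
    Submodule ℝ (EuclideanSpace ℝ (Fin n)) :=
  Submodule.span ℝ (Set.range fun s : T => (WithLp.equiv 2 (Fin n → ℝ)).symm (V s))

noncomputable def famv {m : ℕ} (V : Matrix (Fin m) (Fin n) ℝ) (i : Fin m) :
    EuclideanSpace ℝ (Fin n) := (WithLp.equiv 2 (Fin n → ℝ)).symm (V i)

theorem projSpan_apply {m : ℕ} (V : Matrix (Fin m) (Fin n) ℝ) (T : Finset (Fin m)) (i : Fin m)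
    (j : Fin n) :
    projSpan V T i j
      = (Submodule.orthogonalProjectionOnto (spanV V T) (famv V i) : EuclideanSpace ℝ (Fin n)) j := rfl

theorem gramDet_insert' {m : ℕ} (V : Matrix (Fin m) (Fin n) ℝ) (T : Finset (Fin m)) {i : Fin m}
    (hi : i ∉ T) :
    gramDet V (insert i T)
      = ‖famv V i - (Submodule.orthogonalProjectionOnto (spanV V T) (famv V i) :
          EuclideanSpace ℝ (Fin n))‖ ^ 2 * gramDet V T :=
  gramDet_insert V T hi

section Main
variable {m : ℕ} {A : Matrix (Fin m) (Fin n) ℝ} {S : Finset (Fin m)}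
  {B : Matrix (Fin m) (Fin n) ℝ}

theorem L_rowB (hB : B = A - projSpan A S) (i : Fin m) :
    famv B i = famv A i - (Submodule.orthogonalProjectionOnto (spanV A S) (famv A i) :
      EuclideanSpace ℝ (Fin n)) := by
  ext j
  have : famv B i j = B i j := rfl
  rw [this, hB]
  show A i j - projSpan A S i j = _
  rw [projSpan_apply]
  rfl

theorem L_WleU (hB : B = A - projSpan A S) (T : Finset (Fin m)) :
    spanV B T ≤ (spanV A S)ᗮ := by
  rw [spanV, Submodule.span_le]
  rintro _ ⟨s, rfl⟩
  show famv B s.1 ∈ (spanV A S)ᗮ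
  rw [L_rowB hB]
  exact Submodule.sub_starProjection_mem_orthogonal _

theorem L_span (hB : B = A - projSpan A S) (T : Finset (Fin m)) :
    spanV A (S ∪ T) = spanV A S ⊔ spanV B T := by
  have hUle : spanV A S ≤ spanV A (S ∪ T) := by
    rw [spanV, Submodule.span_le]
    rintro _ ⟨s, rfl⟩
    exact Submodule.subset_span ⟨⟨s.1, Finset.mem_union_left _ s.2⟩, rfl⟩
  apply le_antisymm
  · rw [spanV, Submodule.span_le]
    rintro _ ⟨s, rfl⟩
    rcases Finset.mem_union.mp s.2 with h | h
    · exact Submodule.mem_sup_left (Submodule.subset_span ⟨⟨s.1, h⟩, rfl⟩)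
    · have hs : (WithLp.equiv 2 (Fin n → ℝ)).symm (A s.1)
          = famv B s.1 + (Submodule.orthogonalProjectionOnto (spanV A S) (famv A s.1) :
            EuclideanSpace ℝ (Fin n)) := by
        rw [L_rowB hB]; show famv A s.1 = _; abel
      show (WithLp.equiv 2 (Fin n → ℝ)).symm (A s.1) ∈ spanV A S ⊔ spanV B T
      rw [hs]
      exact Submodule.add_mem _
        (Submodule.mem_sup_right (Submodule.subset_span ⟨⟨s.1, h⟩, rfl⟩))
        (Submodule.mem_sup_left (SetLike.coe_mem _))
  · rw [sup_le_iff]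
    refine ⟨hUle, ?_⟩
    rw [spanV, Submodule.span_le]
    rintro _ ⟨s, rfl⟩
    show famv B s.1 ∈ spanV A (S ∪ T)
    rw [L_rowB hB]
    exact Submodule.sub_mem _
      (Submodule.subset_span ⟨⟨s.1, Finset.mem_union_right _ s.2⟩, rfl⟩)
      (hUle (SetLike.coe_mem _))

theorem L_vec (hB : B = A - projSpan A S) (T : Finset (Fin m)) (i : Fin m) :
    famv A i - (Submodule.orthogonalProjectionOnto (spanV A (S ∪ T)) (famv A i) : EuclideanSpace ℝ (Fin n))
      = famv B i - (Submodule.orthogonalProjectionOnto (spanV B T) (famv B i) : EuclideanSpace ℝ (Fin n)) := by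
  rw [proj_congr (L_span hB T), proj_sup _ _ (L_WleU hB T), ← L_rowB hB]

theorem L_matdiff (hB : B = A - projSpan A S) (T : Finset (Fin m)) :
    A - projSpan A (S ∪ T) = B - projSpan B T := by
  ext i j
  show A i j - projSpan A (S ∪ T) i j = B i j - projSpan B T i j
  rw [projSpan_apply, projSpan_apply]
  have h1 := congrArg (fun x => x j) (L_vec hB T i)
  have h2 : famv A i j = A i j := rfl
  have h3 : famv B i j = B i j := rfl
  simpa [h2, h3] using h1

end Main

section Main2
variable {m : ℕ} {A : Matrix (Fin m) (Fin n) ℝ} {S : Finset (Fin m)}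
  {B : Matrix (Fin m) (Fin n) ℝ}

theorem L_gd (hB : B = A - projSpan A S) :
    ∀ T : Finset (Fin m), Disjoint S T → gramDet A (S ∪ T) = gramDet A S * gramDet B T := by
  classical
  intro T
  induction T using Finset.induction_on with
  | empty =>
      intro _
      have hE : IsEmpty {x // x ∈ (∅ : Finset (Fin m))} := ⟨fun x => Finset.notMem_empty _ x.2⟩
      have h1 : gramDet B ∅ = 1 := by rw [gramDet]; exact Matrix.det_isEmpty
      rw [Finset.union_empty, h1, mul_one]
  | @insert a T' ha ih =>
      intro hdisj
      have haS : a ∉ S := fun h => Finset.disjoint_left.mp hdisj h (Finset.mem_insert_self a T')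
      have hdisj' : Disjoint S T' := hdisj.mono_right (Finset.subset_insert a T')
      have haST : a ∉ S ∪ T' := by simp [haS, ha]
      rw [Finset.union_insert, gramDet_insert' A _ haST, gramDet_insert' B _ ha, ih hdisj',
        L_vec hB T' a]
      ring

theorem L_B0 (hB : B = A - projSpan A S) {i : Fin m} (hi : i ∈ S) : ∀ j, B i j = 0 := by
  have h := L_rowB hB i
  have hmem : famv A i ∈ spanV A S := Submodule.subset_span ⟨⟨i, hi⟩, rfl⟩
  rw [show ((spanV A S).orthogonalProjectionOnto (famv A i) : EuclideanSpace ℝ (Fin n)) = famv A i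
    from Submodule.starProjection_eq_self_iff.mpr hmem, sub_self] at h
  intro j
  have := congrArg (fun x => x j) h
  exact this

theorem L_gB0 (hB : B = A - projSpan A S) (T : Finset (Fin m)) (h : ¬Disjoint S T) :
    gramDet B T = 0 := by
  obtain ⟨a, haS, haT⟩ := Finset.not_disjoint_iff.mp h
  apply Matrix.det_eq_zero_of_row_eq_zero ⟨a, haT⟩
  intro j
  simp [Matrix.mul_apply, rowSub, L_B0 hB haS]

theorem L_rowexp (V : Matrix (Fin m) (Fin n) ℝ) (T : Finset (Fin m)) :
    gramDet V T * frobSq (V - projSpan V T) = ∑ i ∈ Tᶜ, gramDet V (insert i T) := by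
  classical
  have hfr : frobSq (V - projSpan V T)
      = ∑ i, ‖famv V i - (Submodule.orthogonalProjectionOnto (spanV V T) (famv V i) :
          EuclideanSpace ℝ (Fin n))‖ ^ 2 := by
    unfold frobSq
    refine Finset.sum_congr rfl fun i _ => ?_
    rw [enorm_sq]
    refine Finset.sum_congr rfl fun j _ => ?_
    show (V i j - projSpan V T i j) ^ 2 = _
    rw [projSpan_apply]
    rfl
  rw [hfr, Finset.mul_sum, ← Finset.sum_compl_add_sum T]
  have hz : ∀ i ∈ T, gramDet V T * ‖famv V i - (Submodule.orthogonalProjectionOnto (spanV V T) (famv V i) :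
      EuclideanSpace ℝ (Fin n))‖ ^ 2 = 0 := by
    intro i hi
    have hmem : famv V i ∈ spanV V T := Submodule.subset_span ⟨⟨i, hi⟩, rfl⟩
    rw [show ((spanV V T).orthogonalProjectionOnto (famv V i) : EuclideanSpace ℝ (Fin n)) = famv V i
        from Submodule.starProjection_eq_self_iff.mpr hmem, sub_self]
    simp
  rw [Finset.sum_eq_zero hz, add_zero]
  refine Finset.sum_congr rfl fun i hi => ?_
  rw [gramDet_insert' V T (Finset.mem_compl.mp hi)]
  ring

end Main2
end AuxProof

/-- ∑_{T ⊆ [m]\S, |T|=r} det(A_{S∪T} A_{S∪T}ᵀ)·‖A − π_{S∪T}(A)‖_F²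
  = (r+1)·det(A_S A_Sᵀ)·∑_{|T|=r+1} det(B_T B_Tᵀ), where B = A − π_S(A). -/
theorem sum_det_frob {m n : ℕ} (A : Matrix (Fin m) (Fin n) ℝ) (S : Finset (Fin m))
    (B : Matrix (Fin m) (Fin n) ℝ) (hB : B = A - projSpan A S) (r : ℕ) (hr : 1 ≤ r) :
    ∑ T ∈ Finset.powersetCard r (Finset.univ \ S),
        gramDet A (S ∪ T) * frobSq (A - projSpan A (S ∪ T))
      = ((r : ℝ) + 1) * gramDet A S *
          ∑ T ∈ Finset.powersetCard (r + 1) (Finset.univ : Finset (Fin m)), gramDet B T := by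
  classical
  have step1 : ∀ T ∈ Finset.powersetCard r (Finset.univ \ S),
      gramDet A (S ∪ T) * frobSq (A - projSpan A (S ∪ T))
        = gramDet A S * (gramDet B T * frobSq (B - projSpan B T)) := by
    intro T hT
    have hTsub : T ⊆ Finset.univ \ S := (Finset.mem_powersetCard.mp hT).1
    have hdisj : Disjoint S T := by
      rw [Finset.disjoint_right]
      intro a haT
      exact (Finset.mem_sdiff.mp (hTsub haT)).2
    rw [L_gd hB T hdisj, L_matdiff hB T]
    ring
  rw [Finset.sum_congr rfl step1, ← Finset.mul_sum]
  have hsub : Finset.powersetCard r (Finset.univ \ S)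
      ⊆ Finset.powersetCard r (Finset.univ : Finset (Fin m)) :=
    Finset.powersetCard_mono (Finset.subset_univ _)
  have hext : ∑ T ∈ Finset.powersetCard r (Finset.univ \ S),
        gramDet B T * frobSq (B - projSpan B T)
      = ∑ T ∈ Finset.powersetCard r (Finset.univ : Finset (Fin m)),
          gramDet B T * frobSq (B - projSpan B T) := by
    apply Finset.sum_subset hsub
    intro T hTuniv hTnot
    have hnd : ¬ Disjoint S T := by
      intro hdisj
      apply hTnot
      rw [Finset.mem_powersetCard] at hTuniv ⊢
      exact ⟨fun x hx => Finset.mem_sdiff.mpr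
        ⟨Finset.mem_univ _, Finset.disjoint_right.mp hdisj hx⟩, hTuniv.2⟩
    rw [L_gB0 hB T hnd, zero_mul]
  rw [hext]
  have hrw : ∀ T ∈ Finset.powersetCard r (Finset.univ : Finset (Fin m)),
      gramDet B T * frobSq (B - projSpan B T) = ∑ i ∈ Tᶜ, gramDet B (insert i T) :=
    fun T _ => L_rowexp B T
  rw [Finset.sum_congr rfl hrw, comb (gramDet B) r]
  ring
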